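/- In a two-level proportional one-rate bidirectional Clos network, a demand D is feasible — i.e., there exists a feasible routing scheme Y with E(Y) j k ≥ D j k for all j, k — if and only if for every low-level switch index j, Σ_k D j k ≤ Σ_i C i j (the total demand at each low-level switch does not exceed its total link capacity). In particular, proportional one-rate bidirectional Clos networks achieve the theoretical maximum throughput. -/

import Mathlib

open Finset

set_option linter.unusedSectionVars false
set_option linter.unreachableTactic false
set_option linter.unnecessarySeqFocus false
set_option linter.unusedTactic false
set_option maxHeartbeats 1000000




section Helpers

/-- unit matrix -/
def Umat {α β : Type*} [DecidableEq α] [DecidableEq β] (j : α) (k : β) : α → β → ℕ :=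
  fun a b => if a = j ∧ b = k then 1 else 0

variable {α β : Type*} [Fintype α] [DecidableEq α] [Fintype β] [DecidableEq β]

lemma Umat_row (j : α) (k : β) (a : α) : ∑ b, Umat j k a b = if a = j then 1 else 0 := by
  by_cases h : a = j <;> simp [Umat, h]

lemma Umat_col (j : α) (k : β) (b : β) : ∑ a, Umat j k a b = if b = k then 1 else 0 := by
  by_cases h : b = k <;> simp [Umat, h]

lemma trunc (a : α → ℕ) : ∀ e, e ≤ ∑ x, a x → ∃ b : α → ℕ, (∀ x, b x ≤ a x) ∧ ∑ x, b x = e := by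
  intro e
  induction e with
  | zero => exact fun _ => ⟨0, by simp, by simp⟩
  | succ e ih =>
    intro h
    obtain ⟨b, hb, hs⟩ := ih (Nat.le_of_succ_le h)
    obtain ⟨x, hx⟩ : ∃ x, b x < a x := by
      by_contra hc
      push_neg at hc
      have := Finset.sum_le_sum (fun i (_ : i ∈ univ) => hc i)
      omega
    refine ⟨Function.update b x (b x + 1), fun y => ?_, ?_⟩
    · by_cases hy : y = x
      · subst hy; simp; omega
      · simp [Function.update_of_ne hy]; exact hb y
    · rw [Finset.sum_update_of_mem (mem_univ x), ← Finset.erase_eq]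
      rw [← Finset.sum_erase_add _ _ (mem_univ x)] at hs
      omega

lemma margins {ι κ : Type*} [Fintype ι] [Fintype κ] [DecidableEq ι] [DecidableEq κ] :
    ∀ (N : ℕ) (u : ι → ℕ) (v : κ → ℕ), ∑ i, u i ≤ N → ∑ i, u i = ∑ j, v j →
    ∃ M : ι → κ → ℕ, (∀ i, ∑ j, M i j = u i) ∧ (∀ j, ∑ i, M i j = v j) := by
  intro N
  induction N with
  | zero =>
    intro u v hu huv
    refine ⟨0, fun i => ?_, fun j => ?_⟩ <;> simp
    · have : u i ≤ ∑ i, u i := Finset.single_le_sum (fun i _ => Nat.zero_le _) (mem_univ i)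
      omega
    · have : v j ≤ ∑ j, v j := Finset.single_le_sum (fun i _ => Nat.zero_le _) (mem_univ j)
      omega
  | succ N ih =>
    intro u v hu huv
    by_cases h0 : ∑ i, u i = 0
    · refine ⟨0, fun i => ?_, fun j => ?_⟩ <;> simp
      · have : u i ≤ ∑ i, u i := Finset.single_le_sum (fun i _ => Nat.zero_le _) (mem_univ i)
        omega
      · have : v j ≤ ∑ j, v j := Finset.single_le_sum (fun i _ => Nat.zero_le _) (mem_univ j)
        omega
    · obtain ⟨i0, hi0⟩ : ∃ i0, 0 < u i0 := by
        by_contra hc; push_neg at hc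
        simp only [Nat.le_zero] at hc
        exact h0 (Finset.sum_eq_zero fun i _ => hc i)
      obtain ⟨j0, hj0⟩ : ∃ j0, 0 < v j0 := by
        by_contra hc; push_neg at hc
        simp only [Nat.le_zero] at hc
        rw [huv] at h0
        exact h0 (Finset.sum_eq_zero fun j _ => hc j)
      have hu' : ∑ i, Function.update u i0 (u i0 - 1) i = (∑ i, u i) - 1 := by
        rw [Finset.sum_update_of_mem (mem_univ i0), ← Finset.erase_eq]
        rw [← Finset.sum_erase_add _ _ (mem_univ i0)]
        omega
      have hv' : ∑ j, Function.update v j0 (v j0 - 1) j = (∑ j, v j) - 1 := by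
        rw [Finset.sum_update_of_mem (mem_univ j0), ← Finset.erase_eq]
        rw [← Finset.sum_erase_add _ _ (mem_univ j0)]
        omega
      obtain ⟨M, hM1, hM2⟩ := ih (Function.update u i0 (u i0 - 1)) (Function.update v j0 (v j0 - 1))
        (by omega) (by omega)
      refine ⟨fun i j => M i j + Umat i0 j0 i j, fun i => ?_, fun j => ?_⟩
      · rw [Finset.sum_add_distrib, hM1, Umat_row]
        by_cases hi : i = i0
        · subst hi; simp; omega
        · simp [hi, Function.update_of_ne hi]
      · rw [Finset.sum_add_distrib, hM2, Umat_col]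
        by_cases hj : j = j0
        · subst hj; simp; omega
        · simp [hj, Function.update_of_ne hj]

lemma dist' {ι : Type*} [Fintype ι] [DecidableEq ι] (W : ℕ) :
    ∀ (w : ℕ) (g : ι → ℕ), ∑ k, g k ≤ W * w →
    ∃ h : ι → Fin w → ℕ, (∀ k, ∑ p, h k p = g k) ∧ (∀ p, ∑ k, h k p ≤ W) := by
  intro w
  induction w with
  | zero =>
    intro g hg
    have h0 : ∑ k, g k = 0 := by simpa using hg
    refine ⟨fun k => Fin.elim0, fun k => ?_, fun p => p.elim0⟩
    simp
    have : g k ≤ ∑ k, g k := Finset.single_le_sum (fun i _ => Nat.zero_le _) (mem_univ k)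
    omega
  | succ w ih =>
    intro g hg
    obtain ⟨b, hb, hbs⟩ := trunc g (min W (∑ k, g k)) (Nat.min_le_right _ _)
    have hsplit : ∑ k, (g k - b k) + ∑ k, b k = ∑ k, g k := by
      rw [← Finset.sum_add_distrib]
      exact Finset.sum_congr rfl fun k _ => by have := hb k; omega
    obtain ⟨h', h'1, h'2⟩ := ih (fun k => g k - b k) (by
      have hWw : W * (w + 1) = W * w + W := by ring
      show (∑ k, (g k - b k)) ≤ W * w
      omega)
    refine ⟨fun k => Fin.lastCases (b k) (h' k), fun k => ?_, fun p => ?_⟩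
    · rw [Fin.sum_univ_castSucc]
      simp only [Fin.lastCases_castSucc, Fin.lastCases_last]
      have h1 := h'1 k; have h2 := hb k
      omega
    · refine Fin.lastCases ?_ (fun p => ?_) p
      · simp only [Fin.lastCases_last]; omega
      · simp only [Fin.lastCases_castSucc]
        exact h'2 p

end Helpers


lemma Umat_swap {α : Type*} [DecidableEq α] (x y a b : α) : Umat x y a b = Umat y x b a := by
  simp [Umat, and_comm]

lemma Umat_ne {α : Type*} [DecidableEq α] (x y a : α) (h : x ≠ y) : Umat x y a a = 0 := by
  simp [Umat]
  rintro rfl rfl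
  exact h rfl

lemma circ {α : Type*} [Fintype α] [DecidableEq α] : ∀ (N : ℕ) (D : α → α → ℕ), (∑ a, ∑ b, D a b) ≤ N →
    (∀ a b, D a b = D b a) → (∀ a, D a a = 0) → (∀ a, Even (∑ b, D a b)) →
    ∃ F : α → α → ℕ, (∀ a b, F a b + F b a = D a b) ∧ (∀ a, ∑ b, F a b = ∑ b, F b a) := by
  intro N
  induction N with
  | zero =>
    intro D hsum hsym hdiag heven
    have hz : ∀ a b, D a b = 0 := by
      intro a b
      have h1 : D a b ≤ ∑ b, D a b := Finset.single_le_sum (fun i _ => Nat.zero_le _) (mem_univ b)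
      have h2 : (∑ b, D a b) ≤ ∑ a, ∑ b, D a b :=
        Finset.single_le_sum (f := fun a => ∑ b, D a b) (fun i _ => Nat.zero_le _) (mem_univ a)
      omega
    exact ⟨0, fun a b => by simp [hz], fun a => rfl⟩
  | succ N ih =>
    intro D hsum hsym hdiag heven
    by_cases hD : ∀ a b, D a b = 0
    · exact ⟨0, fun a b => by simp [hD], fun a => rfl⟩
    push_neg at hD
    obtain ⟨j, k, hjk0⟩ := hD
    have hjkpos : 0 < D j k := Nat.pos_of_ne_zero hjk0
    have hjk : j ≠ k := fun h => by subst h; exact hjk0 (hdiag j)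
    have hkj : k ≠ j := hjk.symm
    by_cases hB : ∃ l, l ≠ j ∧ 0 < D k l
    · -- Case B: reroute two edges (j,k),(k,l) as (j,l)
      obtain ⟨l, hlj, hklpos⟩ := hB
      have hlk : l ≠ k := fun h => by subst h; simp [hdiag] at hklpos
      have hkl : k ≠ l := hlk.symm
      have hjl : j ≠ l := fun h => hlj h.symm
      set D' : α → α → ℕ := fun a b => D a b + Umat j l a b + Umat l j a b
          - (Umat j k a b + Umat k j a b + Umat k l a b + Umat l k a b) with hD'def
      have P : ∀ a b, D' a b + (Umat j k a b + Umat k j a b + Umat k l a b + Umat l k a b)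
          = D a b + Umat j l a b + Umat l j a b := by
        intro a b
        have hv : Umat j k a b + Umat k j a b + Umat k l a b + Umat l k a b
            ≤ D a b + Umat j l a b + Umat l j a b := by
          by_cases h1 : a = j ∧ b = k
          · rw [h1.1, h1.2]
            simp [Umat, hjk, hkj, hjl, hlj, hlk, hkl]
            omega
          by_cases h2 : a = k ∧ b = j
          · rw [h2.1, h2.2]
            have h5 : D k j = D j k := hsym k j
            simp [Umat, hjk, hkj, hjl, hlj, hlk, hkl]
            omega
          by_cases h3 : a = k ∧ b = l
          · rw [h3.1, h3.2]
            simp [Umat, hjk, hkj, hjl, hlj, hlk, hkl]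
            omega
          by_cases h4 : a = l ∧ b = k
          · rw [h4.1, h4.2]
            have h5 : D l k = D k l := hsym l k
            simp [Umat, hjk, hkj, hjl, hlj, hlk, hkl]
            omega
          · simp only [Umat, if_neg h1, if_neg h2, if_neg h3, if_neg h4]
            omega
        simp only [hD'def]
        omega
      have hrow : ∀ a, (∑ b, D' a b) + ((if a = j then 1 else 0) + (if a = k then 1 else 0)
          + (if a = k then 1 else 0) + (if a = l then 1 else 0))
          = (∑ b, D a b) + ((if a = j then 1 else 0) + (if a = l then 1 else 0)) := by
        intro a
        have e1 : ∑ b, (D' a b + (Umat j k a b + Umat k j a b + Umat k l a b + Umat l k a b))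
            = ∑ b, (D a b + Umat j l a b + Umat l j a b) :=
          Finset.sum_congr rfl (fun b _ => P a b)
        simp only [Finset.sum_add_distrib, Umat_row] at e1
        omega
      have htot : (∑ a, ∑ b, D' a b) + 2 = ∑ a, ∑ b, D a b := by
        have h1 : ∑ a, ((∑ b, D' a b) + ((if a = j then 1 else 0) + (if a = k then 1 else 0)
            + (if a = k then 1 else 0) + (if a = l then 1 else 0)))
            = ∑ a, ((∑ b, D a b) + ((if a = j then 1 else 0) + (if a = l then 1 else 0))) :=
          Finset.sum_congr rfl (fun a _ => hrow a)
        simp only [Finset.sum_add_distrib, Finset.sum_ite_eq' univ, mem_univ, if_true] at h1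
        omega
      have hsym' : ∀ a b, D' a b = D' b a := by
        intro a b
        have p1 := P a b
        have p2 := P b a
        have e1 := Umat_swap j k b a
        have e2 := Umat_swap k j b a
        have e3 := Umat_swap k l b a
        have e4 := Umat_swap l k b a
        have e5 := Umat_swap j l b a
        have e6 := Umat_swap l j b a
        have e7 := hsym a b
        omega
      have hdiag' : ∀ a, D' a a = 0 := by
        intro a
        have h1 := P a a
        rw [Umat_ne j k a hjk, Umat_ne k j a hkj, Umat_ne k l a hkl,
            Umat_ne l k a hlk, Umat_ne j l a hjl, Umat_ne l j a hlj, hdiag a] at h1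
        omega
      have heven' : ∀ a, Even (∑ b, D' a b) := by
        intro a
        have h1 := hrow a
        have h2 := (Nat.even_iff).mp (heven a)
        rw [Nat.even_iff]
        omega
      obtain ⟨F', hF'1, hF'2⟩ := ih D' (by omega) hsym' hdiag' heven'
      have hD'jl : D' j l = D j l + 1 := by
        have h1 := P j l
        rw [show Umat j k j l = 0 by simp [Umat, hjk, hkj, hjl, hlj, hlk, hkl],
            show Umat k j j l = 0 by simp [Umat, hjk, hkj, hjl, hlj, hlk, hkl],
            show Umat k l j l = 0 by simp [Umat, hjk, hkj, hjl, hlj, hlk, hkl],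
            show Umat l k j l = 0 by simp [Umat, hjk, hkj, hjl, hlj, hlk, hkl],
            show Umat j l j l = 1 by simp [Umat],
            show Umat l j j l = 0 by simp [Umat, hjk, hkj, hjl, hlj, hlk, hkl]] at h1
        omega
      have hcases : 0 < F' j l ∨ 0 < F' l j := by
        have := hF'1 j l
        omega
      rcases hcases with hpos | hpos
      · -- orient j -> k -> l, remove j -> l
        have Q : ∀ a b, (F' a b + Umat j k a b + Umat k l a b - Umat j l a b) + Umat j l a b
            = F' a b + Umat j k a b + Umat k l a b := by
          intro a b
          have hv : Umat j l a b ≤ F' a b + Umat j k a b + Umat k l a b := by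
            by_cases h1 : a = j ∧ b = l
            · rw [h1.1, h1.2]
              simp [Umat, hjk, hkj, hjl, hlj, hlk, hkl]
              omega
            · simp [Umat, h1]
          omega
        refine ⟨fun a b => F' a b + Umat j k a b + Umat k l a b - Umat j l a b,
          fun a b => ?_, fun a => ?_⟩
        · show (F' a b + Umat j k a b + Umat k l a b - Umat j l a b)
              + (F' b a + Umat j k b a + Umat k l b a - Umat j l b a) = D a b
          have q1 := Q a b
          have q2 := Q b a
          have p1 := P a b
          have h1 := hF'1 a b
          have e1 := Umat_swap j l b a
          have e2 := Umat_swap j k b a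
          have e3 := Umat_swap k l b a
          omega
        · show (∑ b, (F' a b + Umat j k a b + Umat k l a b - Umat j l a b))
              = ∑ b, (F' b a + Umat j k b a + Umat k l b a - Umat j l b a)
          have hr : (∑ b, ((F' a b + Umat j k a b + Umat k l a b - Umat j l a b) + Umat j l a b))
              = ∑ b, (F' a b + Umat j k a b + Umat k l a b) :=
            Finset.sum_congr rfl (fun b _ => Q a b)
          have hc : (∑ b, ((F' b a + Umat j k b a + Umat k l b a - Umat j l b a) + Umat j l b a))
              = ∑ b, (F' b a + Umat j k b a + Umat k l b a) :=
            Finset.sum_congr rfl (fun b _ => Q b a)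
          simp only [Finset.sum_add_distrib, Umat_row] at hr
          simp only [Finset.sum_add_distrib, Umat_col] at hc
          have hb := hF'2 a
          omega
      · -- orient l -> k -> j, remove l -> j
        have Q : ∀ a b, (F' a b + Umat k j a b + Umat l k a b - Umat l j a b) + Umat l j a b
            = F' a b + Umat k j a b + Umat l k a b := by
          intro a b
          have hv : Umat l j a b ≤ F' a b + Umat k j a b + Umat l k a b := by
            by_cases h1 : a = l ∧ b = j
            · rw [h1.1, h1.2]
              simp [Umat, hjk, hkj, hjl, hlj, hlk, hkl]
              omega
            · simp [Umat, h1]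
          omega
        refine ⟨fun a b => F' a b + Umat k j a b + Umat l k a b - Umat l j a b,
          fun a b => ?_, fun a => ?_⟩
        · show (F' a b + Umat k j a b + Umat l k a b - Umat l j a b)
              + (F' b a + Umat k j b a + Umat l k b a - Umat l j b a) = D a b
          have q1 := Q a b
          have q2 := Q b a
          have p1 := P a b
          have h1 := hF'1 a b
          have e1 := Umat_swap l j b a
          have e2 := Umat_swap k j b a
          have e3 := Umat_swap l k b a
          omega
        · show (∑ b, (F' a b + Umat k j a b + Umat l k a b - Umat l j a b))
              = ∑ b, (F' b a + Umat k j b a + Umat l k b a - Umat l j b a)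
          have hr : (∑ b, ((F' a b + Umat k j a b + Umat l k a b - Umat l j a b) + Umat l j a b))
              = ∑ b, (F' a b + Umat k j a b + Umat l k a b) :=
            Finset.sum_congr rfl (fun b _ => Q a b)
          have hc : (∑ b, ((F' b a + Umat k j b a + Umat l k b a - Umat l j b a) + Umat l j b a))
              = ∑ b, (F' b a + Umat k j b a + Umat l k b a) :=
            Finset.sum_congr rfl (fun b _ => Q b a)
          simp only [Finset.sum_add_distrib, Umat_row] at hr
          simp only [Finset.sum_add_distrib, Umat_col] at hc
          have hb := hF'2 a
          omega
    · -- Case A: D k j ≥ 2, remove a double edge, orient both ways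
      push_neg at hB
      have hkj2 : 2 ≤ D k j := by
        have hsingle : (∑ b, D k b) = D k j := by
          apply Finset.sum_eq_single
          · intro b _ hbj
            have := hB b hbj
            omega
          · intro h
            exact absurd (mem_univ j) h
        have h1 := (Nat.even_iff).mp (heven k)
        rw [hsingle] at h1
        have h2 : 0 < D k j := by rw [hsym k j]; exact hjkpos
        omega
      have hjk2 : 2 ≤ D j k := by rw [hsym j k]; exact hkj2
      set D' : α → α → ℕ := fun a b => D a b - (2 * Umat j k a b + 2 * Umat k j a b) with hD'def
      have P : ∀ a b, D' a b + 2 * Umat j k a b + 2 * Umat k j a b = D a b := by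
        intro a b
        have hv : 2 * Umat j k a b + 2 * Umat k j a b ≤ D a b := by
          by_cases h1 : a = j ∧ b = k
          · rw [h1.1, h1.2]
            simp [Umat, hjk, hkj]
            omega
          by_cases h2 : a = k ∧ b = j
          · rw [h2.1, h2.2]
            simp [Umat, hjk, hkj]
            omega
          · simp [Umat, h1, h2]
        simp only [hD'def]
        omega
      have hrow : ∀ a, (∑ b, D' a b) + 2 * (if a = j then 1 else 0) + 2 * (if a = k then 1 else 0)
          = ∑ b, D a b := by
        intro a
        have e1 : ∑ b, (D' a b + 2 * Umat j k a b + 2 * Umat k j a b) = ∑ b, D a b :=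
          Finset.sum_congr rfl (fun b _ => P a b)
        simp only [Finset.sum_add_distrib, ← Finset.mul_sum, Umat_row] at e1
        omega
      have htot : (∑ a, ∑ b, D' a b) + 4 = ∑ a, ∑ b, D a b := by
        have h1 : ∑ a, ((∑ b, D' a b) + 2 * (if a = j then 1 else 0) + 2 * (if a = k then 1 else 0))
            = ∑ a, ∑ b, D a b := Finset.sum_congr rfl (fun a _ => hrow a)
        simp only [Finset.sum_add_distrib, ← Finset.mul_sum,
          Finset.sum_ite_eq' univ, mem_univ, if_true] at h1
        omega
      have hsym' : ∀ a b, D' a b = D' b a := by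
        intro a b
        have p1 := P a b
        have p2 := P b a
        have e1 := Umat_swap j k b a
        have e2 := Umat_swap k j b a
        have e7 := hsym a b
        omega
      have hdiag' : ∀ a, D' a a = 0 := by
        intro a
        have h1 := P a a
        rw [Umat_ne j k a hjk, Umat_ne k j a hkj, hdiag a] at h1
        omega
      have heven' : ∀ a, Even (∑ b, D' a b) := by
        intro a
        have h1 := hrow a
        have h2 := (Nat.even_iff).mp (heven a)
        rw [Nat.even_iff]
        omega
      obtain ⟨F', hF'1, hF'2⟩ := ih D' (by omega) hsym' hdiag' heven'
      refine ⟨fun a b => F' a b + Umat j k a b + Umat k j a b, fun a b => ?_, fun a => ?_⟩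
      · show (F' a b + Umat j k a b + Umat k j a b) + (F' b a + Umat j k b a + Umat k j b a) = D a b
        have h1 := hF'1 a b
        have p1 := P a b
        have e1 := Umat_swap j k b a
        have e2 := Umat_swap k j b a
        omega
      · show (∑ b, (F' a b + Umat j k a b + Umat k j a b)) = ∑ b, (F' b a + Umat j k b a + Umat k j b a)
        simp only [Finset.sum_add_distrib, Umat_row, Umat_col]
        have hb := hF'2 a
        omega

lemma even_total {α : Type} [Fintype α] [DecidableEq α] [LinearOrder α] (D : α → α → ℕ)
    (hsym : ∀ a b, D a b = D b a) (hdiag : ∀ a, D a a = 0) :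
    Even (∑ a, ∑ b, D a b) := by
  have h0 : (∑ a, ∑ b, D a b) = ∑ p ∈ univ ×ˢ univ, D p.1 p.2 := by
    rw [Finset.sum_product]
  rw [h0, ← Finset.sum_filter_add_sum_filter_not (univ ×ˢ univ) (fun p => p.1 < p.2)]
  rw [← Finset.sum_filter_add_sum_filter_not
    ((univ ×ˢ univ).filter (fun p => ¬ p.1 < p.2)) (fun p => p.2 < p.1)]
  have hdiagsum : ∑ p ∈ (((univ ×ˢ univ).filter (fun p => ¬ p.1 < p.2)).filter
      (fun p => ¬ p.2 < p.1)), D p.1 p.2 = 0 := by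
    apply Finset.sum_eq_zero
    intro p hp
    simp only [Finset.mem_filter] at hp
    have h1 : p.1 = p.2 := le_antisymm (not_lt.mp hp.2) (not_lt.mp hp.1.2)
    rw [h1]
    exact hdiag p.2
  have hswap : ∑ p ∈ (((univ ×ˢ univ).filter (fun p => ¬ p.1 < p.2)).filter
      (fun p => p.2 < p.1)), D p.1 p.2
      = ∑ p ∈ ((univ ×ˢ univ).filter (fun p => p.1 < p.2)), D p.1 p.2 := by
    apply Finset.sum_nbij' (i := fun p => (p.2, p.1)) (j := fun p => (p.2, p.1))
    · intro p hp
      simp only [Finset.mem_filter, Finset.mem_product] at hp ⊢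
      exact ⟨⟨mem_univ _, mem_univ _⟩, hp.2⟩
    · intro p hp
      simp only [Finset.mem_filter, Finset.mem_product] at hp ⊢
      exact ⟨⟨⟨mem_univ _, mem_univ _⟩, not_lt.mpr (le_of_lt hp.2)⟩, hp.2⟩
    · intro p _; rfl
    · intro p _; rfl
    · intro p _
      exact hsym p.1 p.2
  rw [hdiagsum, hswap]
  exact ⟨∑ p ∈ ((univ ×ˢ univ).filter (fun p => p.1 < p.2)), D p.1 p.2, by omega⟩

lemma orient (m : ℕ) (D : Fin m → Fin m → ℕ)
    (hsym : ∀ a b, D a b = D b a) (hdiag : ∀ a, D a a = 0) :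
    ∃ F : Fin m → Fin m → ℕ, (∀ a b, F a b + F b a = D a b) ∧
      (∀ a, 2 * (∑ b, F a b) ≤ (∑ b, D a b) + 1) ∧
      (∀ a, 2 * (∑ b, F b a) ≤ (∑ b, D a b) + 1) := by
  classical
  set Dh : Fin (m+1) → Fin (m+1) → ℕ := fun a b =>
    if ha : (a : ℕ) < m then
      (if hb : (b : ℕ) < m then D ⟨a, ha⟩ ⟨b, hb⟩ else (∑ c, D ⟨a, ha⟩ c) % 2)
    else
      (if hb : (b : ℕ) < m then (∑ c, D ⟨b, hb⟩ c) % 2 else 0) with hDh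
  have hDh_cast : ∀ (j k : Fin m), Dh j.castSucc k.castSucc = D j k := by
    intro j k
    simp only [hDh, Fin.coe_castSucc, Fin.is_lt, dif_pos, Fin.eta]
  have hDh_last : ∀ (j : Fin m), Dh j.castSucc (Fin.last m) = (∑ c, D j c) % 2 := by
    intro j
    simp only [hDh, Fin.coe_castSucc, Fin.is_lt, dif_pos, Fin.val_last, lt_irrefl, dif_neg,
      Fin.eta, not_lt_of_ge (le_refl m)]
    simp
  have hDh_last' : ∀ (j : Fin m), Dh (Fin.last m) j.castSucc = (∑ c, D j c) % 2 := by
    intro j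
    simp only [hDh, Fin.coe_castSucc, Fin.is_lt, dif_pos, Fin.val_last, lt_irrefl, dif_neg,
      Fin.eta, not_lt_of_ge (le_refl m)]
    simp
  have hDh_ll : Dh (Fin.last m) (Fin.last m) = 0 := by
    simp only [hDh, Fin.val_last, lt_irrefl, dif_neg, not_lt_of_ge (le_refl m)]
    simp
  have hsymh : ∀ a b, Dh a b = Dh b a := by
    intro a b
    simp only [hDh]
    by_cases ha : (a : ℕ) < m <;> by_cases hb : (b : ℕ) < m <;>
      simp only [ha, hb, dif_pos, dif_neg, not_false_iff] <;> first | exact hsym _ _ | rfl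
  have hdiagh : ∀ a, Dh a a = 0 := by
    intro a
    simp only [hDh]
    by_cases ha : (a : ℕ) < m <;> simp only [ha, dif_pos, dif_neg, not_false_iff]
    exact hdiag _
  have hrowh : ∀ j : Fin m, (∑ b, Dh j.castSucc b) = (∑ c, D j c) + (∑ c, D j c) % 2 := by
    intro j
    rw [Fin.sum_univ_castSucc]
    rw [hDh_last j]
    congr 1
    exact Finset.sum_congr rfl (fun k _ => hDh_cast j k)
  have hcolh : ∀ j : Fin m, (∑ b, Dh b j.castSucc) = (∑ c, D j c) + (∑ c, D j c) % 2 := by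
    intro j
    rw [Fin.sum_univ_castSucc, hDh_last' j]
    congr 1
    exact Finset.sum_congr rfl (fun k _ => (hDh_cast k j).trans (hsym k j))
  have hevenh : ∀ a, Even (∑ b, Dh a b) := by
    intro a
    induction a using Fin.lastCases with
    | last =>
      rw [Fin.sum_univ_castSucc, hDh_ll]
      have h1 : (∑ b : Fin m, Dh (Fin.last m) b.castSucc) = ∑ b : Fin m, (∑ c, D b c) % 2 :=
        Finset.sum_congr rfl (fun b _ => hDh_last' b)
      rw [h1]
      have h2 : Even (∑ a, ∑ b, D a b) := even_total D hsym hdiag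
      rw [Nat.even_iff] at h2 ⊢
      have h3 : (∑ b : Fin m, (∑ c, D b c) % 2) % 2 = (∑ b : Fin m, ∑ c, D b c) % 2 :=
        (Finset.sum_nat_mod univ 2 _).symm
      omega
    | cast j =>
      rw [hrowh j, Nat.even_iff]
      omega
  obtain ⟨Fh, hFh1, hFh2⟩ := circ (∑ a, ∑ b, Dh a b) Dh le_rfl hsymh hdiagh hevenh
  refine ⟨fun a b => Fh a.castSucc b.castSucc, fun a b => ?_, fun a => ?_, fun a => ?_⟩
  · rw [hFh1, hDh_cast]
  · -- 2 * out ≤ deg + 1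
    show 2 * (∑ b : Fin m, Fh a.castSucc b.castSucc) ≤ (∑ b, D a b) + 1
    have hb : (∑ b, Fh a.castSucc b) = ∑ b, Fh b a.castSucc := hFh2 a.castSucc
    have hsum2 : (∑ b, Fh a.castSucc b) + (∑ b, Fh b a.castSucc) = ∑ b, Dh a.castSucc b := by
      rw [← Finset.sum_add_distrib]
      exact Finset.sum_congr rfl (fun b _ => hFh1 a.castSucc b)
    have hrow := hrowh a
    have hout : (∑ b : Fin m, Fh a.castSucc b.castSucc) ≤ ∑ b, Fh a.castSucc b := by
      rw [Fin.sum_univ_castSucc]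
      omega
    have hpar : (∑ c, D a c) % 2 ≤ 1 := Nat.le_of_lt_succ (Nat.mod_lt _ (by norm_num))
    omega
  · -- 2 * in ≤ deg + 1
    show 2 * (∑ b : Fin m, Fh b.castSucc a.castSucc) ≤ (∑ b, D a b) + 1
    have hb : (∑ b, Fh a.castSucc b) = ∑ b, Fh b a.castSucc := hFh2 a.castSucc
    have hsum2 : (∑ b, Fh a.castSucc b) + (∑ b, Fh b a.castSucc) = ∑ b, Dh a.castSucc b := by
      rw [← Finset.sum_add_distrib]
      exact Finset.sum_congr rfl (fun b _ => hFh1 a.castSucc b)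
    have hrow := hrowh a
    have hin : (∑ b : Fin m, Fh b.castSucc a.castSucc) ≤ ∑ b, Fh b a.castSucc := by
      rw [Fin.sum_univ_castSucc]
      omega
    have hpar : (∑ c, D a c) % 2 ≤ 1 := Nat.le_of_lt_succ (Nat.mod_lt _ (by norm_num))
    omega

lemma perm_decomp {α : Type} [Fintype α] [DecidableEq α] :
    ∀ (s : ℕ) (M : α → α → ℕ), (∀ r, ∑ c, M r c = s) → (∀ c, ∑ r, M r c = s) →
    ∃ A : Fin s → α → α → ℕ,
      (∀ t r, ∑ c, A t r c = 1) ∧ (∀ t c, ∑ r, A t r c = 1) ∧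
      (∀ r c, ∑ t, A t r c = M r c) := by
  intro s
  induction s with
  | zero =>
    intro M hrow hcol
    refine ⟨fun t => t.elim0, fun t => t.elim0, fun t => t.elim0, fun r c => ?_⟩
    have h1 : M r c ≤ ∑ c, M r c := Finset.single_le_sum (fun i _ => Nat.zero_le _) (mem_univ c)
    rw [hrow r] at h1
    simp
    omega
  | succ s ih =>
    intro M hrow hcol
    -- Hall condition
    have hall : ∀ (S : Finset α), S.card ≤ (S.biUnion (fun r => univ.filter (fun c => 0 < M r c))).card := by
      intro S
      have h1 : (s+1) * S.card = ∑ r ∈ S, ∑ c, M r c := by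
        rw [Finset.sum_congr rfl (fun r (_ : r ∈ S) => hrow r), Finset.sum_const, smul_eq_mul,
          mul_comm]
      have h2 : ∀ r ∈ S, (∑ c, M r c) = ∑ c ∈ S.biUnion (fun r => univ.filter (fun c => 0 < M r c)), M r c := by
        intro r hr
        refine (Finset.sum_subset (Finset.subset_univ _) ?_).symm
        intro c _ hc
        by_contra hpos
        apply hc
        apply Finset.mem_biUnion.mpr
        exact ⟨r, hr, Finset.mem_filter.mpr ⟨mem_univ c, by omega⟩⟩
      have h3 : (∑ r ∈ S, ∑ c, M r c)
          ≤ ∑ c ∈ S.biUnion (fun r => univ.filter (fun c => 0 < M r c)), ∑ r, M r c := by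
        rw [Finset.sum_congr rfl h2, Finset.sum_comm]
        apply Finset.sum_le_sum
        intro c _
        exact Finset.sum_le_sum_of_subset (Finset.subset_univ S)
      have h4 : (∑ c ∈ S.biUnion (fun r => univ.filter (fun c => 0 < M r c)), ∑ r, M r c)
          = (s+1) * (S.biUnion (fun r => univ.filter (fun c => 0 < M r c))).card := by
        rw [Finset.sum_congr rfl (fun c _ => hcol c), Finset.sum_const, smul_eq_mul, mul_comm]
      have := h1 ▸ h3
      rw [h4] at this
      exact Nat.le_of_mul_le_mul_left this (Nat.succ_pos s)
    obtain ⟨f, hfinj, hf⟩ := (Finset.all_card_le_biUnion_card_iff_exists_injective _).mp hall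
    have hfbij : Function.Bijective f := ⟨hfinj, Finite.surjective_of_injective hfinj⟩
    have hfpos : ∀ r, 0 < M r (f r) := by
      intro r
      have := hf r
      simp only [Finset.mem_filter, mem_univ, true_and] at this
      exact this
    set e : α ≃ α := Equiv.ofBijective f hfbij with he
    set M' : α → α → ℕ := fun r c => M r c - (if c = f r then 1 else 0) with hM'
    have hpt : ∀ r c, M' r c + (if c = f r then 1 else 0) = M r c := by
      intro r c
      by_cases h : c = f r
      · have := hfpos r
        simp only [hM']
        simp [h]
        omega
      · simp [hM', h]
    have hrow' : ∀ r, ∑ c, M' r c = s := by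
      intro r
      have h1 : ∑ c, (M' r c + (if c = f r then 1 else 0)) = ∑ c, M r c :=
        Finset.sum_congr rfl (fun c _ => hpt r c)
      rw [Finset.sum_add_distrib, Finset.sum_ite_eq' univ, hrow r] at h1
      simp at h1
      omega
    have hcol' : ∀ c, ∑ r, M' r c = s := by
      intro c
      have h1 : ∑ r, (M' r c + (if c = f r then 1 else 0)) = ∑ r, M r c :=
        Finset.sum_congr rfl (fun r _ => hpt r c)
      have h2 : ∀ r : α, (c = f r) ↔ (r = e.symm c) := by
        intro r
        constructor
        · intro h; subst h; exact (Equiv.symm_apply_apply e r).symm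
        · intro h; subst h; exact (Equiv.apply_symm_apply e c).symm
      have h3 : (∑ x : α, if c = f x then 1 else 0) = ∑ x : α, if x = e.symm c then 1 else 0 :=
        Finset.sum_congr rfl (fun r _ => by simp only [h2 r])
      rw [Finset.sum_add_distrib, hcol c, h3, Finset.sum_ite_eq' univ] at h1
      simp at h1
      omega
    obtain ⟨A', hA'1, hA'2, hA'3⟩ := ih M' hrow' hcol'
    refine ⟨fun t => Fin.cases (fun r c => if c = f r then 1 else 0) A' t,
      fun t => ?_, fun t => ?_, fun r c => ?_⟩
    · induction t using Fin.cases with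
      | zero => intro r; simp [Finset.sum_ite_eq' univ]
      | succ t => intro r; exact hA'1 t r
    · induction t using Fin.cases with
      | zero =>
        intro c
        have h2 : ∀ r : α, (c = f r) ↔ (r = e.symm c) := by
          intro r
          constructor
          · intro h; subst h; exact (Equiv.symm_apply_apply e r).symm
          · intro h; subst h; exact (Equiv.apply_symm_apply e c).symm
        simp only [Fin.cases_zero]
        have h3 : (∑ x : α, if c = f x then 1 else 0) = ∑ x : α, if x = e.symm c then 1 else 0 :=
          Finset.sum_congr rfl (fun r _ => by simp only [h2 r])
        rw [h3, Finset.sum_ite_eq' univ]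
        simp
      | succ t => intro c; exact hA'2 t c
    · rw [Fin.sum_univ_succ]
      simp only [Fin.cases_zero, Fin.cases_succ]
      rw [hA'3 r c]
      have := hpt r c
      omega

theorem stmt_2 (m n : ℕ) (C : Fin n → Fin m → ℕ)
    (WT : Fin n → ℕ) (WL : Fin m → ℕ)
    (hprop : ∀ i j, C i j = 2 * WT i * WL j)
    (D : Fin m → Fin m → ℕ)
    (hDsymm : ∀ j k, D j k = D k j)
    (hDdiag : ∀ j, D j j = 0) :
    (∃ Y : Fin n → Fin m → Fin m → ℕ,
        (∀ i j k, Y i j k = Y i k j) ∧ (∀ i j, Y i j j = 0) ∧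
        (∀ i j, ∑ k, Y i j k ≤ C i j) ∧
        (∀ j k, D j k ≤ ∑ i, Y i j k))
    ↔ (∀ j, ∑ k, D j k ≤ ∑ i, C i j) := by
  constructor
  · rintro ⟨Y, hsymY, hdiagY, hcap, hdem⟩ j
    calc ∑ k, D j k ≤ ∑ k, ∑ i, Y i j k := Finset.sum_le_sum (fun k _ => hdem j k)
    _ = ∑ i, ∑ k, Y i j k := Finset.sum_comm
    _ ≤ ∑ i, C i j := Finset.sum_le_sum (fun i _ => hcap i j)
  · intro hcond
    classical
    set W : ℕ := ∑ i, WT i with hW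
    have hdeg : ∀ j, (∑ k, D j k) ≤ 2 * (W * WL j) := by
      intro j
      have h1 := hcond j
      have h2 : (∑ i, C i j) = 2 * (W * WL j) := by
        rw [Finset.sum_congr rfl (fun i _ => hprop i j), ← Finset.sum_mul, ← Finset.mul_sum,
          ← hW]
        ring
      omega
    obtain ⟨F, hF1, hF2, hF3⟩ := orient m D hDsymm hDdiag
    have hFdiag : ∀ j, F j j = 0 := by
      intro j
      have := hF1 j j
      have := hDdiag j
      omega
    have hout : ∀ j, (∑ k, F j k) ≤ W * WL j := by
      intro j
      have := hF2 j
      have := hdeg j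
      omega
    have hin : ∀ j, (∑ k, F k j) ≤ W * WL j := by
      intro j
      have := hF3 j
      have := hdeg j
      omega
    choose ρ hρ1 hρ2 using fun j => dist' W (WL j) (fun k => F j k) (hout j)
    choose γ hγ1 hγ2 using fun k => dist' W (WL k) (fun j => F j k) (hin k)
    choose B hB1 hB2 using fun j k => margins (F j k) (fun p => ρ j k p) (fun q => γ k j q)
      (le_of_eq (hρ1 j k)) ((hρ1 j k).trans (hγ1 k j).symm)
    -- expanded matrix on copies
    set E : ((j : Fin m) × Fin (WL j)) → ((j : Fin m) × Fin (WL j)) → ℕ :=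
      fun r c => B r.1 c.1 r.2 c.2 with hE
    have hrowE : ∀ r, (∑ c, E r c) = ∑ k, ρ r.1 k r.2 := by
      intro r
      rw [← Finset.univ_sigma_univ, Finset.sum_sigma]
      exact Finset.sum_congr rfl (fun k _ => hB1 r.1 k r.2)
    have hcolE : ∀ c, (∑ r, E r c) = ∑ j, γ c.1 j c.2 := by
      intro c
      rw [← Finset.univ_sigma_univ, Finset.sum_sigma]
      exact Finset.sum_congr rfl (fun j _ => hB2 j c.1 c.2)
    have hrowEW : ∀ r, (∑ c, E r c) ≤ W := fun r => by rw [hrowE r]; exact hρ2 r.1 r.2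
    have hcolEW : ∀ c, (∑ r, E r c) ≤ W := fun c => by rw [hcolE c]; exact hγ2 c.1 c.2
    -- padding
    have hpadeq : (∑ r, (W - ∑ c, E r c)) = ∑ c, (W - ∑ r, E r c) := by
      have h1 : (∑ r, (W - ∑ c, E r c)) + (∑ r, ∑ c, E r c) = ∑ r : ((j : Fin m) × Fin (WL j)), W := by
        rw [← Finset.sum_add_distrib]
        exact Finset.sum_congr rfl (fun r _ => by have := hrowEW r; omega)
      have h2 : (∑ c, (W - ∑ r, E r c)) + (∑ c, ∑ r, E r c) = ∑ c : ((j : Fin m) × Fin (WL j)), W := by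
        rw [← Finset.sum_add_distrib]
        exact Finset.sum_congr rfl (fun c _ => by have := hcolEW c; omega)
      have h3 : (∑ r, ∑ c, E r c) = ∑ c, ∑ r, E r c := Finset.sum_comm
      omega
    obtain ⟨S, hS1, hS2⟩ := margins (∑ r, (W - ∑ c, E r c))
      (fun r => W - ∑ c, E r c) (fun c => W - ∑ r, E r c) le_rfl hpadeq
    set M : ((j : Fin m) × Fin (WL j)) → ((j : Fin m) × Fin (WL j)) → ℕ :=
      fun r c => E r c + S r c with hM
    have hrowM : ∀ r, (∑ c, M r c) = W := by
      intro r
      rw [Finset.sum_add_distrib, hS1 r]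
      have := hrowEW r
      omega
    have hcolM : ∀ c, (∑ r, M r c) = W := by
      intro c
      rw [Finset.sum_add_distrib, hS2 c]
      have := hcolEW c
      omega
    obtain ⟨A, hA1, hA2, hA3⟩ := perm_decomp W M hrowM hcolM
    -- truncate A down to E
    choose Gh hGh1 hGh2 using fun (r c : ((j : Fin m) × Fin (WL j))) =>
      trunc (fun t => A t r c) (E r c) (by rw [hA3 r c]; exact Nat.le_add_right _ _)
    -- per-unit-switch subgraphs
    set G : Fin W → Fin m → Fin m → ℕ := fun t j k => ∑ p, ∑ q, Gh ⟨j, p⟩ ⟨k, q⟩ t with hG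
    have gsum : ∀ j k, (∑ t, G t j k) = F j k := by
      intro j k
      have h1 : (∑ t, G t j k) = ∑ p, ∑ q, ∑ t, Gh ⟨j, p⟩ ⟨k, q⟩ t := by
        rw [Finset.sum_comm]
        exact Finset.sum_congr rfl (fun p _ => Finset.sum_comm)
      rw [h1]
      have h2 : ∀ (p : Fin (WL j)) (q : Fin (WL k)), (∑ t, Gh ⟨j, p⟩ ⟨k, q⟩ t) = B j k p q :=
        fun p q => hGh2 ⟨j, p⟩ ⟨k, q⟩
      rw [Finset.sum_congr rfl (fun p _ => Finset.sum_congr rfl (fun q _ => h2 p q))]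
      rw [Finset.sum_congr rfl (fun p _ => hB1 j k p), hρ1 j k]
    have grow : ∀ t j, (∑ k, G t j k) ≤ WL j := by
      intro t j
      have h1 : (∑ k, G t j k) = ∑ p, ∑ c : ((j : Fin m) × Fin (WL j)), Gh ⟨j, p⟩ c t := by
        rw [Finset.sum_comm]
        refine Finset.sum_congr rfl (fun p _ => ?_)
        rw [← Finset.univ_sigma_univ, Finset.sum_sigma]
      rw [h1]
      calc ∑ p, ∑ c : ((j : Fin m) × Fin (WL j)), Gh ⟨j, p⟩ c t
          ≤ ∑ p : Fin (WL j), ∑ c : ((j : Fin m) × Fin (WL j)), A t ⟨j, p⟩ c :=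
            Finset.sum_le_sum (fun p _ => Finset.sum_le_sum (fun c _ => hGh1 ⟨j, p⟩ c t))
        _ = ∑ p : Fin (WL j), 1 := Finset.sum_congr rfl (fun p _ => hA1 t ⟨j, p⟩)
        _ = WL j := by simp
    have gcol : ∀ t k, (∑ j, G t j k) ≤ WL k := by
      intro t k
      have h1 : (∑ j, G t j k) = ∑ q, ∑ r : ((j : Fin m) × Fin (WL j)), Gh r ⟨k, q⟩ t := by
        have h0 : (∑ j, G t j k) = ∑ j, ∑ q, ∑ p, Gh ⟨j, p⟩ ⟨k, q⟩ t :=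
          Finset.sum_congr rfl (fun j _ => Finset.sum_comm)
        rw [h0, Finset.sum_comm]
        refine Finset.sum_congr rfl (fun q _ => ?_)
        rw [← Finset.univ_sigma_univ, Finset.sum_sigma]
      rw [h1]
      calc ∑ q, ∑ r : ((j : Fin m) × Fin (WL j)), Gh r ⟨k, q⟩ t
          ≤ ∑ q : Fin (WL k), ∑ r : ((j : Fin m) × Fin (WL j)), A t r ⟨k, q⟩ :=
            Finset.sum_le_sum (fun q _ => Finset.sum_le_sum (fun r _ => hGh1 r ⟨k, q⟩ t))
        _ = ∑ q : Fin (WL k), 1 := Finset.sum_congr rfl (fun q _ => hA2 t ⟨k, q⟩)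
        _ = WL k := by simp
    have gdiag : ∀ t j, G t j j = 0 := by
      intro t j
      have hBdiag : ∀ p q, B j j p q = 0 := by
        intro p q
        have h1 : (∑ p, ρ j j p) = 0 := by rw [hρ1 j j, hFdiag j]
        have h2 : ρ j j p = 0 := by
          have := Finset.sum_eq_zero_iff.mp h1 p (mem_univ p)
          exact this
        have h3 : (∑ q, B j j p q) = 0 := by rw [hB1 j j p, h2]
        exact Finset.sum_eq_zero_iff.mp h3 q (mem_univ q)
      have hGh0 : ∀ p q, Gh ⟨j, p⟩ ⟨j, q⟩ t = 0 := by
        intro p q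
        have h1 : (∑ t, Gh ⟨j, p⟩ ⟨j, q⟩ t) = 0 := by
          rw [hGh2 ⟨j, p⟩ ⟨j, q⟩]
          exact hBdiag p q
        exact Finset.sum_eq_zero_iff.mp h1 t (mem_univ t)
      simp only [hG]
      exact Finset.sum_eq_zero (fun p _ => Finset.sum_eq_zero (fun q _ => hGh0 p q))
    -- assignment of unit switches to switches
    have hcard : Fintype.card (Fin W) = Fintype.card ((i : Fin n) × Fin (WT i)) := by
      simp [Fintype.card_sigma, hW]
    set e : Fin W ≃ ((i : Fin n) × Fin (WT i)) := Fintype.equivOfCardEq hcard with he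
    set φ : Fin W → Fin n := fun t => (e t).1 with hφ
    have hfib : ∀ i, (∑ t, if φ t = i then 1 else 0) = WT i := by
      intro i
      have h1 : (∑ t, if φ t = i then 1 else 0) = ∑ x : ((i : Fin n) × Fin (WT i)), if x.1 = i then 1 else 0 := by
        refine Fintype.sum_equiv e _ _ (fun t => rfl)
      rw [h1, ← Finset.univ_sigma_univ, Finset.sum_sigma]
      have h2 : ∀ i' : Fin n, (∑ p : Fin (WT i'), if i' = i then 1 else 0) = if i' = i then WT i' else 0 := by
        intro i'
        by_cases h : i' = i <;> simp [h]
      rw [Finset.sum_congr rfl (fun i' _ => h2 i')]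
      rw [Finset.sum_ite_eq' univ]
      simp
    refine ⟨fun i j k => ∑ t, if φ t = i then G t j k + G t k j else 0, ?_, ?_, ?_, ?_⟩
    · intro i j k
      exact Finset.sum_congr rfl (fun t _ => by rw [Nat.add_comm (G t j k) (G t k j)])
    · intro i j
      exact Finset.sum_eq_zero (fun t _ => by simp [gdiag t j])
    · intro i j
      have h1 : (∑ k, ∑ t, if φ t = i then G t j k + G t k j else 0)
          = ∑ t, if φ t = i then (∑ k, (G t j k + G t k j)) else 0 := by
        rw [Finset.sum_comm]
        refine Finset.sum_congr rfl (fun t _ => ?_)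
        by_cases h : φ t = i <;> simp [h]
      rw [h1]
      calc (∑ t, if φ t = i then (∑ k, (G t j k + G t k j)) else 0)
          ≤ ∑ t, if φ t = i then 2 * WL j else 0 := by
            refine Finset.sum_le_sum (fun t _ => ?_)
            by_cases h : φ t = i <;> simp [h]
            rw [Finset.sum_add_distrib]
            have := grow t j
            have := gcol t j
            omega
        _ = ∑ t, (2 * WL j) * (if φ t = i then 1 else 0) := by
            refine Finset.sum_congr rfl (fun t _ => ?_)
            by_cases h : φ t = i <;> simp [h]
        _ = (2 * WL j) * WT i := by rw [← Finset.mul_sum, hfib i]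
        _ ≤ C i j := by rw [hprop i j]; ring_nf; omega
    · intro j k
      have h1 : (∑ i, ∑ t, if φ t = i then G t j k + G t k j else 0)
          = ∑ t, (G t j k + G t k j) := by
        rw [Finset.sum_comm]
        refine Finset.sum_congr rfl (fun t _ => ?_)
        rw [Finset.sum_ite_eq univ (φ t) (fun _ => G t j k + G t k j)]
        simp
      have h2 : (∑ t, (G t j k + G t k j)) = D j k := by
        rw [Finset.sum_add_distrib, gsum j k, gsum k j]
        exact hF1 j k
      rw [h1, h2]
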